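/- Let J : ℝⁿ × ℝᵖ → ℝ be twice continuously differentiable, let θ̄, θ̃ ∈ ℝᵖ, set Δθ = θ̃ − θ̄ and θ(t) = θ̄ + t Δθ for t ∈ [0,1]. Suppose m̂ : [0,1] → ℝⁿ is differentiable, satisfies ∇_m J(m̂(t), θ(t)) = 0 for all t ∈ [0,1], and H(m̂(t), θ(t)) is invertible for all t ∈ [0,1]. Then m̂ solves the initial value problem dm̂/dt (t) = −H(m̂(t), θ(t))⁻¹ B(m̂(t), θ(t)) Δθ for t ∈ [0,1]. -/

import Mathlib

/-- The gradient of `J` with respect to its first argument `m`. -/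
noncomputable def gradM {n p : ℕ}
    (J : EuclideanSpace ℝ (Fin n) × EuclideanSpace ℝ (Fin p) → ℝ)
    (m : EuclideanSpace ℝ (Fin n)) (θ : EuclideanSpace ℝ (Fin p)) :
    EuclideanSpace ℝ (Fin n) :=
  gradient (fun m' => J (m', θ)) m

/-- The Hessian `H(m, θ) = ∇²_{mm} J(m, θ)`, as the derivative of the gradient in `m`. -/
noncomputable def HessM {n p : ℕ}
    (J : EuclideanSpace ℝ (Fin n) × EuclideanSpace ℝ (Fin p) → ℝ)
    (m : EuclideanSpace ℝ (Fin n)) (θ : EuclideanSpace ℝ (Fin p)) :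
    EuclideanSpace ℝ (Fin n) →L[ℝ] EuclideanSpace ℝ (Fin n) :=
  fderiv ℝ (fun m' => gradM J m' θ) m

/-- The mixed second derivative `B(m, θ) = ∇²_{mθ} J(m, θ)`. -/
noncomputable def MixedB {n p : ℕ}
    (J : EuclideanSpace ℝ (Fin n) × EuclideanSpace ℝ (Fin p) → ℝ)
    (m : EuclideanSpace ℝ (Fin n)) (θ : EuclideanSpace ℝ (Fin p)) :
    EuclideanSpace ℝ (Fin p) →L[ℝ] EuclideanSpace ℝ (Fin n) :=
  fderiv ℝ (fun θ' => gradM J m θ') θ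

section Aux

variable {n p : ℕ}

/-- The gradient-in-`m` map as a function of both variables. -/
noncomputable def Gmap (J : EuclideanSpace ℝ (Fin n) × EuclideanSpace ℝ (Fin p) → ℝ)
    (q : EuclideanSpace ℝ (Fin n) × EuclideanSpace ℝ (Fin p)) : EuclideanSpace ℝ (Fin n) :=
  (InnerProductSpace.toDual ℝ (EuclideanSpace ℝ (Fin n))).symm
    ((fderiv ℝ J q).comp (ContinuousLinearMap.inl ℝ _ _))

theorem gradM_eq_Gmap (J : EuclideanSpace ℝ (Fin n) × EuclideanSpace ℝ (Fin p) → ℝ)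
    (hJ : ContDiff ℝ 2 J) (m : EuclideanSpace ℝ (Fin n)) (θ : EuclideanSpace ℝ (Fin p)) :
    gradM J m θ = Gmap J (m, θ) := by
  have hd : HasFDerivAt J (fderiv ℝ J (m, θ)) (m, θ) :=
    (hJ.differentiable (by norm_num)).differentiableAt.hasFDerivAt
  have h1 : HasFDerivAt (fun m' => J (m', θ))
      ((fderiv ℝ J (m, θ)).comp (ContinuousLinearMap.inl ℝ _ _)) m :=
    hd.comp m (hasFDerivAt_prodMk_left m θ)
  unfold gradM Gmap gradient
  rw [h1.fderiv]

/-- The fixed continuous linear postprocessing map used in `Gmap`. -/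
noncomputable def Amap :
    (((EuclideanSpace ℝ (Fin n) × EuclideanSpace ℝ (Fin p)) →L[ℝ] ℝ) →L[ℝ]
      EuclideanSpace ℝ (Fin n)) :=
  ((InnerProductSpace.toDual ℝ (EuclideanSpace ℝ (Fin n))).symm.toContinuousLinearEquiv :
      _ ≃L[ℝ] _).toContinuousLinearMap.comp
    ((ContinuousLinearMap.compL ℝ (EuclideanSpace ℝ (Fin n))
      (EuclideanSpace ℝ (Fin n) × EuclideanSpace ℝ (Fin p)) ℝ).flip
      (ContinuousLinearMap.inl ℝ _ _))

theorem contDiff_Gmap (J : EuclideanSpace ℝ (Fin n) × EuclideanSpace ℝ (Fin p) → ℝ)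
    (hJ : ContDiff ℝ 2 J) : ContDiff ℝ 1 (Gmap J) := by
  have h1 : ContDiff ℝ 1 (fun q => fderiv ℝ J q) :=
    hJ.fderiv_right (by norm_num)
  have : Gmap J = fun q => (Amap : _ →L[ℝ] _) (fderiv ℝ J q) := rfl
  rw [this]
  exact (Amap (n := n) (p := p)).contDiff.comp h1

end Aux

theorem stmt2 {n p : ℕ}
    (J : EuclideanSpace ℝ (Fin n) × EuclideanSpace ℝ (Fin p) → ℝ)
    (hJ : ContDiff ℝ 2 J)
    (θbar θtil : EuclideanSpace ℝ (Fin p))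
    -- the path θ(t) = θ̄ + t (θ̃ - θ̄) with Δθ = θ̃ - θ̄
    (θpath : ℝ → EuclideanSpace ℝ (Fin p))
    (hθpath : ∀ t : ℝ, θpath t = θbar + t • (θtil - θbar))
    (mhat : ℝ → EuclideanSpace ℝ (Fin n))
    (hdiff : ∀ t ∈ Set.Icc (0:ℝ) 1, DifferentiableWithinAt ℝ mhat (Set.Icc (0:ℝ) 1) t)
    (hopt : ∀ t ∈ Set.Icc (0:ℝ) 1, gradM J (mhat t) (θpath t) = 0)
    (Hinv : ℝ → (EuclideanSpace ℝ (Fin n) →L[ℝ] EuclideanSpace ℝ (Fin n)))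
    (hinv1 : ∀ t ∈ Set.Icc (0:ℝ) 1, (HessM J (mhat t) (θpath t)).comp (Hinv t)
        = ContinuousLinearMap.id ℝ (EuclideanSpace ℝ (Fin n)))
    (hinv2 : ∀ t ∈ Set.Icc (0:ℝ) 1, (Hinv t).comp (HessM J (mhat t) (θpath t))
        = ContinuousLinearMap.id ℝ (EuclideanSpace ℝ (Fin n))) :
    ∀ t ∈ Set.Icc (0:ℝ) 1,
      derivWithin mhat (Set.Icc (0:ℝ) 1) t
        = -(Hinv t (MixedB J (mhat t) (θpath t) (θtil - θbar))) := by
  intro t ht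
  set Δθ := θtil - θbar with hΔ
  set m' := derivWithin mhat (Set.Icc (0:ℝ) 1) t with hm'
  set q : ℝ → EuclideanSpace ℝ (Fin n) × EuclideanSpace ℝ (Fin p) :=
    fun s => (mhat s, θpath s) with hq
  have hGdiff : ContDiff ℝ 1 (Gmap J) := contDiff_Gmap J hJ
  -- derivative of θpath
  have hθdiff : HasDerivAt θpath Δθ t := by
    have : HasDerivAt (fun s : ℝ => θbar + s • Δθ) ((1:ℝ) • Δθ) t :=
      ((hasDerivAt_id t).smul_const Δθ).const_add θbar
    simpa [funext hθpath] using this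
  -- derivative of q within Icc
  have hqdiff : HasDerivWithinAt q (m', Δθ) (Set.Icc (0:ℝ) 1) t :=
    (hdiff t ht).hasDerivWithinAt.prodMk (hθdiff.hasDerivWithinAt)
  -- chain rule
  have hGfd : HasFDerivAt (Gmap J) (fderiv ℝ (Gmap J) (q t)) (q t) :=
    ((hGdiff.differentiable one_ne_zero) (q t)).hasFDerivAt
  have hchain : HasDerivWithinAt (fun s => Gmap J (q s))
      (fderiv ℝ (Gmap J) (q t) (m', Δθ)) (Set.Icc (0:ℝ) 1) t :=
    hGfd.comp_hasDerivWithinAt t hqdiff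
  -- the composite is zero on Icc
  have hzero : HasDerivWithinAt (fun s => Gmap J (q s)) 0 (Set.Icc (0:ℝ) 1) t := by
    refine (hasDerivWithinAt_const t _ (0 : EuclideanSpace ℝ (Fin n))).congr ?_ ?_
    · intro s hs
      rw [← gradM_eq_Gmap J hJ]
      exact hopt s hs
    · rw [← gradM_eq_Gmap J hJ]
      exact hopt t ht
  have hu : UniqueDiffWithinAt ℝ (Set.Icc (0:ℝ) 1) t :=
    (uniqueDiffOn_Icc zero_lt_one) t ht
  have hkey : fderiv ℝ (Gmap J) (q t) (m', Δθ) = 0 := by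
    rw [← hchain.derivWithin hu, hzero.derivWithin hu]
  -- identify HessM and MixedB with partial applications of fderiv of Gmap
  have hHess : HessM J (mhat t) (θpath t)
      = (fderiv ℝ (Gmap J) (q t)).comp (ContinuousLinearMap.inl ℝ _ _) := by
    have h1 : HasFDerivAt (fun x => Gmap J (x, θpath t))
        ((fderiv ℝ (Gmap J) (q t)).comp (ContinuousLinearMap.inl ℝ _ _)) (mhat t) :=
      by have h := hGfd.comp (mhat t) (hasFDerivAt_prodMk_left (𝕜 := ℝ) (mhat t) (θpath t)); exact h
    have : HessM J (mhat t) (θpath t) = fderiv ℝ (fun x => Gmap J (x, θpath t)) (mhat t) := by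
      unfold HessM
      congr 1
      ext x
      rw [gradM_eq_Gmap J hJ]
    rw [this, h1.fderiv]
  have hMix : MixedB J (mhat t) (θpath t)
      = (fderiv ℝ (Gmap J) (q t)).comp (ContinuousLinearMap.inr ℝ _ _) := by
    have h1 : HasFDerivAt (fun y => Gmap J (mhat t, y))
        ((fderiv ℝ (Gmap J) (q t)).comp (ContinuousLinearMap.inr ℝ _ _)) (θpath t) :=
      by have h := hGfd.comp (θpath t) (hasFDerivAt_prodMk_right (𝕜 := ℝ) (mhat t) (θpath t)); exact h
    have : MixedB J (mhat t) (θpath t) = fderiv ℝ (fun y => Gmap J (mhat t, y)) (θpath t) := by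
      unfold MixedB
      congr 1
      ext y
      rw [gradM_eq_Gmap J hJ]
    rw [this, h1.fderiv]
  -- split the direction
  have hsplit : HessM J (mhat t) (θpath t) m' + MixedB J (mhat t) (θpath t) Δθ = 0 := by
    rw [hHess, hMix]
    simp only [ContinuousLinearMap.comp_apply, ContinuousLinearMap.inl_apply,
      ContinuousLinearMap.inr_apply]
    rw [← ContinuousLinearMap.map_add]
    convert hkey using 2
    simp [Prod.ext_iff]
  -- apply the inverse
  have h2 : Hinv t (HessM J (mhat t) (θpath t) m') = m' := by
    have := ContinuousLinearMap.ext_iff.mp (hinv2 t ht) m'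
    simpa using this
  have := congrArg (fun v => Hinv t v) hsplit
  simp only [ContinuousLinearMap.map_add, h2, ContinuousLinearMap.map_zero] at this
  exact eq_neg_of_add_eq_zero_left this
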